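/- With the first-order rogue wave construction of the context (λ0 purely imaginary with Im(λ0) > 0, so ζ > 0 and every a_j > 0), for each fixed j ∈ {1,…,n} the value 1 + (n+1)·sin(ω_j) is the greatest element of the set of values |q_j^{[1]}(x,t)| / a_j, where β ranges over all vectors of ℂ^{n+1} linearly independent from ξ_0 and (x,t) ranges over ℝ². Moreover this greatest value is attained at β = η_j (the vector of ℂ^{n+1} with first entry 1, (j+1)-th entry i, and all other entries 0) and (x,t) = (0,0). -/

import Mathlib

open Complex Matrix Finset

noncomputable section

/-- Index type for `(n+1)×(n+1)` matrices: a `1`-block plus an `n`-block. -/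
abbrev Idx (n : ℕ) := Fin 1 ⊕ Fin n

/-- `ζ = 2·Im(λ0)/(n+1)`. -/
def zeta (n : ℕ) (l0 : ℂ) : ℝ := 2 * l0.im / (n + 1)

/-- `ω_j = jπ/(n+1)`. -/
def om (n j : ℕ) : ℝ := j * Real.pi / (n + 1)

/-- `a_j = ζ·csc(ω_j)` for `j = 1,…,n` (indexed by `j : Fin n` as `j+1`). -/
def aa (n : ℕ) (l0 : ℂ) (j : Fin n) : ℝ := zeta n l0 / Real.sin (om n ((j : ℕ) + 1))

/-- `b_j = ζ·cot(ω_j) − 2·Re(λ0)` for `j = 1,…,n`. -/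
def bb (n : ℕ) (l0 : ℂ) (j : Fin n) : ℝ :=
  zeta n l0 * (Real.cos (om n ((j : ℕ) + 1)) / Real.sin (om n ((j : ℕ) + 1))) - 2 * l0.re

/-- `z0 = 2·Re(λ0) + i·ζ`. -/
def zz0 (n : ℕ) (l0 : ℂ) : ℂ := 2 * l0.re + Complex.I * zeta n l0

/-- The `(n+1)×(n+1)` matrix `B` with `(1,1)` entry `i·n·ζ`, first row/column entries `a_j`,
diagonal entries `−(z0 + b_j)` and all other entries `0`. -/
def Bmat (n : ℕ) (l0 : ℂ) : Matrix (Idx n) (Idx n) ℂ :=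
  Matrix.fromBlocks
    (Matrix.of fun _ _ => Complex.I * n * zeta n l0)
    (Matrix.of fun _ j => (aa n l0 j : ℂ))
    (Matrix.of fun i _ => (aa n l0 i : ℂ))
    (Matrix.diagonal fun j => -(zz0 n l0 + (bb n l0 j : ℂ)))

/-- The vector `ξ_0 = (1, a_1/(z0+b_1), …, a_n/(z0+b_n))ᵀ`. -/
def xi0 (n : ℕ) (l0 : ℂ) : Idx n → ℂ :=
  Sum.elim (fun _ => 1)
    (fun k : Fin n => (aa n l0 k : ℂ) / (zz0 n l0 + (bb n l0 k : ℂ)))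

/-- The matrix polynomial
`A(x,t) = Σ_{s=0}^{n} Σ_{k=0}^{⌊n/2⌋} (i^{s+k}/(2^k s! k!)) B^{s+2k} (x+z0 t)^s t^k`. -/
def Amat (n : ℕ) (l0 : ℂ) (x t : ℝ) : Matrix (Idx n) (Idx n) ℂ :=
  ∑ s ∈ Finset.range (n + 1), ∑ k ∈ Finset.range (n / 2 + 1),
    ((Complex.I ^ (s + k) * ((x : ℂ) + zz0 n l0 * (t : ℂ)) ^ s * (t : ℂ) ^ k) /
        ((2 : ℂ) ^ k * (Nat.factorial s : ℂ) * (Nat.factorial k : ℂ))) •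
      (Bmat n l0) ^ (s + 2 * k)

/-- The plane-wave phase `θ_j(x,t) = b_j x − (b_j²/2 − Σ_k a_k²) t`. -/
def theta (n : ℕ) (l0 : ℂ) (j : Fin n) (x t : ℝ) : ℝ :=
  bb n l0 j * x - ((bb n l0 j) ^ 2 / 2 - ∑ k, (aa n l0 k) ^ 2) * t

/-- The plane-wave background `q_j^{bg}(x,t) = a_j e^{iθ_j(x,t)}`. -/
def qbg (n : ℕ) (l0 : ℂ) (j : Fin n) (x t : ℝ) : ℂ :=
  (aa n l0 j : ℂ) * Complex.exp (Complex.I * (theta n l0 j x t : ℝ))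

/-- The vector `w(x,t) = A(x,t)·β`. -/
def wvec (n : ℕ) (l0 : ℂ) (β : Idx n → ℂ) (x t : ℝ) : Idx n → ℂ :=
  (Amat n l0 x t).mulVec β

/-- The first-order rogue wave
`q_j^{[1]} = q_j^{bg}·(1 − 2i(n+1)ζ w_{j+1} conj(w_1)/(a_j ‖w‖²))`. -/
def q1 (n : ℕ) (l0 : ℂ) (β : Idx n → ℂ) (j : Fin n) (x t : ℝ) : ℂ :=
  qbg n l0 j x t *
    (1 - 2 * Complex.I * ((n : ℂ) + 1) * (zeta n l0 : ℝ) *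
        wvec n l0 β x t (Sum.inr j) * (starRingEnd ℂ) (wvec n l0 β x t (Sum.inl 0)) /
      ((aa n l0 j : ℂ) * ((∑ i, Complex.normSq (wvec n l0 β x t i) : ℝ) : ℂ)))

/-- The vector `η_j` with first entry `1`, `(j+1)`-th entry `i`, other entries `0`. -/
def etaJ (n : ℕ) (j : Fin n) : Idx n → ℂ :=
  Sum.elim (fun _ => 1) (fun k : Fin n => if k = j then Complex.I else 0)


private lemma Amat_zero' (n : ℕ) (l0 : ℂ) : Amat n l0 0 0 = 1 := by
  unfold Amat
  rw [Finset.sum_eq_single 0]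
  · rw [Finset.sum_eq_single 0]
    · simp
    · intro k hk hk0
      simp [zero_pow hk0]
    · simp
  · intro s hs hs0
    apply Finset.sum_eq_zero
    intro k hk
    simp [zero_pow hs0]
  · simp

private lemma wvec_zero' (n : ℕ) (l0 : ℂ) (β : Idx n → ℂ) : wvec n l0 β 0 0 = β := by
  rw [wvec, Amat_zero', Matrix.one_mulVec]

private lemma abs_qbg' (n : ℕ) (l0 : ℂ) (j : Fin n) (x t : ℝ) (ha : 0 ≤ aa n l0 j) :
    ‖qbg n l0 j x t‖ = aa n l0 j := by
  simp [qbg, Complex.norm_exp, Complex.mul_re, _root_.abs_of_nonneg ha]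

/-- for each component `j`, `1 + (n+1)·sin ω_j` is the greatest value of
`|q_j^{[1]}(x,t)|/a_j` over all admissible `β` and `(x,t) ∈ ℝ²`, and it is attained at
`β = η_j` and `(x,t) = (0,0)`. -/
theorem stmt19 (n : ℕ) (hn : 1 ≤ n) (l0 : ℂ) (hre : l0.re = 0) (him : 0 < l0.im) :
    ∀ j : Fin n,
      IsGreatest
        {r : ℝ | ∃ (β : Idx n → ℂ) (x t : ℝ),
          LinearIndependent ℂ ![β, xi0 n l0] ∧
          r = ‖q1 n l0 β j x t‖ / aa n l0 j}
        (1 + ((n : ℝ) + 1) * Real.sin (om n ((j : ℕ) + 1))) ∧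
      LinearIndependent ℂ ![etaJ n j, xi0 n l0] ∧
      ‖q1 n l0 (etaJ n j) j 0 0‖ / aa n l0 j =
        1 + ((n : ℝ) + 1) * Real.sin (om n ((j : ℕ) + 1)) := by
  intro j
  have hz : 0 < zeta n l0 := by unfold zeta; positivity
  have hsin : 0 < Real.sin (om n ((j:ℕ)+1)) := by
    apply Real.sin_pos_of_pos_of_lt_pi
    · unfold om; positivity
    · unfold om
      rw [div_lt_iff₀ (by positivity)]
      have h1 : ((j:ℕ)+1 : ℝ) < (n:ℝ)+1 := by exact_mod_cast Nat.add_lt_add_right j.2 1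
      push_cast
      nlinarith [Real.pi_pos]
  have ha : 0 < aa n l0 j := div_pos hz hsin
  have hratio : zeta n l0 / aa n l0 j = Real.sin (om n ((j:ℕ)+1)) := by
    rw [aa, div_div_eq_mul_div, mul_div_assoc, mul_comm, div_mul_cancel₀ _ hz.ne']
  have hane : (aa n l0 j : ℂ) ≠ 0 := by exact_mod_cast ha.ne'
  -- linear independence of η_j and ξ0
  have hLI : LinearIndependent ℂ ![etaJ n j, xi0 n l0] := by
    rw [linearIndependent_fin2]
    constructor
    · simp only [Matrix.cons_val_one, Matrix.head_cons]
      intro h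
      have := congrFun h (Sum.inl 0)
      simp [xi0] at this
    · intro a h
      simp only [Matrix.cons_val_one, Matrix.head_cons, Matrix.cons_val_zero] at h
      have h0 := congrFun h (Sum.inl 0)
      have hj := congrFun h (Sum.inr j)
      simp [xi0, etaJ] at h0 hj
      subst h0
      rw [one_mul] at hj
      have hne : zz0 n l0 + (bb n l0 j : ℂ) ≠ 0 := by
        intro h'
        have := congrArg Complex.im h'
        simp [zz0] at this
        exact hz.ne' this
      rw [div_eq_iff hne] at hj
      have := congrArg Complex.re hj
      simp [zz0, hre, Complex.mul_re] at this
      linarith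
  -- value attained at η_j, (0,0)
  have hval : ‖q1 n l0 (etaJ n j) j 0 0‖ / aa n l0 j =
      1 + ((n : ℝ) + 1) * Real.sin (om n ((j : ℕ) + 1)) := by
    have hS : (∑ i, Complex.normSq (etaJ n j i)) = 2 := by
      rw [Fintype.sum_sum_type]
      simp [etaJ, apply_ite Complex.normSq, Finset.sum_ite_eq', Complex.normSq_I]
      norm_num
    have key : q1 n l0 (etaJ n j) j 0 0 =
        qbg n l0 j 0 0 * ((1 + ((n:ℝ)+1) * Real.sin (om n ((j:ℕ)+1)) : ℝ) : ℂ) := by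
      rw [q1]
      simp only [wvec_zero', hS]
      congr 1
      have h1 : (etaJ n j) (Sum.inr j) = Complex.I := by simp [etaJ]
      have h2 : (etaJ n j) (Sum.inl 0) = 1 := by simp [etaJ]
      rw [h1, h2, ← hratio]
      push_cast
      rw [_root_.map_one, mul_one]
      field_simp
      ring_nf
      rw [Complex.I_sq]
      ring
    have hpos : (0:ℝ) ≤ 1 + ((n:ℝ)+1) * Real.sin (om n ((j:ℕ)+1)) := by positivity
    rw [key, norm_mul, abs_qbg' n l0 j 0 0 ha.le, Complex.norm_real,
      Real.norm_of_nonneg hpos, mul_comm, mul_div_assoc, div_self ha.ne', mul_one]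
  -- upper bound for all β, x, t
  have hub : ∀ (β : Idx n → ℂ) (x t : ℝ),
      ‖q1 n l0 β j x t‖ / aa n l0 j ≤
        1 + ((n : ℝ) + 1) * Real.sin (om n ((j : ℕ) + 1)) := by
    intro β x t
    set w1 := wvec n l0 β x t (Sum.inl 0) with hw1
    set wj := wvec n l0 β x t (Sum.inr j) with hwj
    set S : ℝ := ∑ i, Complex.normSq (wvec n l0 β x t i) with hSdef
    set z : ℂ := 2 * Complex.I * ((n : ℂ) + 1) * (zeta n l0 : ℝ) * wj * (starRingEnd ℂ) w1 /
        ((aa n l0 j : ℂ) * (S : ℂ)) with hzdef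
    have hq : ‖q1 n l0 β j x t‖ = aa n l0 j * ‖1 - z‖ := by
      rw [q1, norm_mul, abs_qbg' n l0 j x t ha.le]
    rw [hq, mul_comm, mul_div_assoc, div_self ha.ne', mul_one]
    have htri : ‖1 - z‖ ≤ 1 + ‖z‖ := by
      calc ‖1 - z‖ ≤ ‖(1:ℂ)‖ + ‖-z‖ := by
            rw [sub_eq_add_neg]; exact norm_add_le _ _
      _ = 1 + ‖z‖ := by simp
    refine htri.trans ?_
    have hkey : 2 * (‖wj‖ * ‖w1‖) ≤ S := by
      have e1 : S = (∑ i : Fin 1, Complex.normSq (wvec n l0 β x t (Sum.inl i))) +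
          ∑ k : Fin n, Complex.normSq (wvec n l0 β x t (Sum.inr k)) := by
        rw [hSdef, Fintype.sum_sum_type]
      have e2 : (∑ i : Fin 1, Complex.normSq (wvec n l0 β x t (Sum.inl i))) =
          Complex.normSq w1 := by simp [hw1]
      have e3 : Complex.normSq wj ≤ ∑ k : Fin n, Complex.normSq (wvec n l0 β x t (Sum.inr k)) :=
        Finset.single_le_sum (f := fun k => Complex.normSq (wvec n l0 β x t (Sum.inr k)))
          (fun k _ => Complex.normSq_nonneg _) (Finset.mem_univ j)
      have e4 : 2 * (‖wj‖ * ‖w1‖) ≤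
          ‖wj‖ ^ 2 + ‖w1‖ ^ 2 := by
        nlinarith [sq_nonneg (‖wj‖ - ‖w1‖)]
      rw [Complex.sq_norm, Complex.sq_norm] at e4
      linarith
    have hS0 : 0 ≤ S := Finset.sum_nonneg fun i _ => Complex.normSq_nonneg _
    have habsz : ‖z‖ = 2 * ((n:ℝ)+1) * zeta n l0 * (‖wj‖ * ‖w1‖) /
        (aa n l0 j * S) := by
      rw [hzdef, norm_div]
      simp only [norm_mul, Complex.norm_I, Complex.norm_real, Complex.norm_conj]
      rw [Real.norm_of_nonneg hz.le, Real.norm_of_nonneg ha.le, Real.norm_of_nonneg hS0]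
      have : ‖((n:ℂ)+1)‖ = (n:ℝ)+1 := by
        rw [show ((n:ℂ)+1) = (((n:ℝ)+1 : ℝ) : ℂ) by push_cast; ring, Complex.norm_real]
        exact Real.norm_of_nonneg (by positivity)
      rw [this]
      norm_num
      ring
    rw [habsz]
    have hfinal : 2 * ((n:ℝ)+1) * zeta n l0 * (‖wj‖ * ‖w1‖) /
        (aa n l0 j * S) ≤ ((n:ℝ)+1) * Real.sin (om n ((j:ℕ)+1)) := by
      rw [← hratio]
      rcases eq_or_lt_of_le hS0 with hS | hS
      · have h0 : ‖wj‖ * ‖w1‖ = 0 := by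
          nlinarith [mul_nonneg (norm_nonneg wj) (norm_nonneg w1)]
        rw [h0, ← hS]
        simp only [mul_zero, zero_div, div_zero]
        positivity
      · rw [← mul_div_assoc, div_le_div_iff₀ (by positivity) ha]
        nlinarith [mul_le_mul_of_nonneg_left hkey
          (by positivity : (0:ℝ) ≤ ((n:ℝ)+1) * zeta n l0)]
    linarith
  refine ⟨⟨⟨etaJ n j, 0, 0, hLI, hval.symm⟩, ?_⟩, hLI, hval⟩
  rintro r ⟨β, x, t, -, rfl⟩
  exact hub β x t


end
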